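/- Let X be a metric space with a proper isometric G-action, where G acts by a continuous ℝ-flow Φ commuting appropriately (X is a flow space). If there exist g ∈ G and t > 0 with Φ_t(c) = g·c for some c ∈ X, then the flow line Φ_ℝ(c) = {Φ_s(c) | s ∈ ℝ} is closed in X. -/

import Mathlib

open Pointwise Filter Topology

theorem stmt8 {G X : Type*} [Group G] [MetricSpace X] [MulAction G X] [AddAction ℝ X]
    (hiso : ∀ g : G, Isometry (fun x : X => g • x))
    (hproper : ∀ K : Set X, IsCompact K → {g : G | (K ∩ g • K).Nonempty}.Finite)
    (hflowcont : Continuous fun p : ℝ × X => p.1 +ᵥ p.2)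
    (hcomm : ∀ (g : G) (t : ℝ) (x : X), t +ᵥ (g • x) = g • (t +ᵥ x))
    (c : X) (g : G) (t : ℝ) (ht : 0 < t) (h : t +ᵥ c = g • c) :
    IsClosed (Set.range fun s : ℝ => s +ᵥ c) := by
  -- negative period
  have hneg : (-t) +ᵥ c = g⁻¹ • c := by
    have h1 : (-t) +ᵥ (t +ᵥ c) = (-t) +ᵥ (g • c) := by rw [h]
    rw [← add_vadd, neg_add_cancel, zero_vadd, hcomm] at h1
    exact (inv_smul_eq_iff.2 h1).symm
  -- key: integer multiples of t act as powers of g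
  have key : ∀ n : ℤ, ((n : ℝ) * t) +ᵥ c = g ^ n • c := by
    intro n
    induction n using Int.induction_on with
    | zero => simp
    | succ k ih =>
      have e : (((k : ℤ) + 1 : ℤ) : ℝ) * t = t + (k : ℤ) * t := by push_cast; ring
      rw [e, add_vadd, ih, hcomm, h, ← mul_smul, ← zpow_add_one]
    | pred k ih =>
      have e : (((-(k : ℤ)) - 1 : ℤ) : ℝ) * t = (-t) + ((-(k:ℤ) : ℤ) : ℝ) * t := by
        push_cast; ring
      rw [e, add_vadd, ih, hcomm, hneg, ← mul_smul, ← zpow_sub_one]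
  -- flow map is continuous
  have hcontc : Continuous fun s : ℝ => s +ᵥ c :=
    hflowcont.comp (continuous_id.prodMk continuous_const)
  set K : Set X := (fun s : ℝ => s +ᵥ c) '' Set.Icc 0 t with hKdef
  have hK : IsCompact K := (isCompact_Icc).image hcontc
  -- the flow line is the union of translates of K
  have hSeq : (Set.range fun s : ℝ => s +ᵥ c) = ⋃ n : ℤ, g ^ n • K := by
    ext x
    constructor
    · rintro ⟨s, rfl⟩
      refine Set.mem_iUnion.2 ⟨⌊s / t⌋, ?_⟩
      set n : ℤ := ⌊s / t⌋
      set r : ℝ := s - n * t with hr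
      have hr0 : 0 ≤ r := Int.sub_floor_div_mul_nonneg s ht
      have hrt : r < t := Int.sub_floor_div_mul_lt s ht
      refine ⟨r +ᵥ c, ⟨r, ⟨hr0, le_of_lt hrt⟩, rfl⟩, ?_⟩
      show g ^ n • (r +ᵥ c) = s +ᵥ c
      rw [← hcomm, ← key, ← add_vadd]
      congr 1
      rw [hr]; ring
    · intro hx
      obtain ⟨n, y, ⟨r, hr, rfl⟩, rfl⟩ := Set.mem_iUnion.1 hx
      refine ⟨r + n * t, ?_⟩
      show (r + (n : ℝ) * t) +ᵥ c = g ^ n • (r +ᵥ c)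
      rw [← hcomm, ← key, ← add_vadd, add_comm]
  rw [hSeq]
  -- prove closedness via sequences
  apply IsSeqClosed.isClosed
  intro u x hu hux
  -- choose exponents
  choose n hn using fun k => Set.mem_iUnion.1 (hu k)
  -- compact set containing K and the sequence with its limit
  set C : Set X := K ∪ insert x (Set.range u) with hCdef
  have hC : IsCompact C := hK.union (hux.isCompact_insert_range)
  have hmem : ∀ k, g ^ (n k) ∈ {h : G | (C ∩ h • C).Nonempty} := by
    intro k
    refine ⟨u k, Or.inr (Set.mem_insert_of_mem _ ⟨k, rfl⟩), ?_⟩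
    obtain ⟨y, hy, hyk⟩ := hn k
    exact ⟨y, Or.inl hy, hyk⟩
  have hfin : {h : G | (C ∩ h • C).Nonempty}.Finite := hproper C hC
  -- pigeonhole: some group element occurs infinitely often
  have : ∃ h0 : {h : G | (C ∩ h • C).Nonempty}, {k : ℕ | g ^ (n k) = (h0 : G)}.Infinite := by
    haveI : Finite {h : G | (C ∩ h • C).Nonempty} := hfin
    obtain ⟨h0, hh0⟩ := Finite.exists_infinite_fiber (fun k : ℕ => (⟨g ^ (n k), hmem k⟩ :
      {h : G | (C ∩ h • C).Nonempty}))
    refine ⟨h0, ?_⟩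
    rw [← Set.infinite_coe_iff]
    refine Infinite.of_injective (fun z : (fun k : ℕ => (⟨g ^ (n k), hmem k⟩ :
      {h : G | (C ∩ h • C).Nonempty})) ⁻¹' {h0} =>
      (⟨z.1, by have := z.2; simp only [Set.mem_preimage, Set.mem_singleton_iff] at this
                exact congrArg Subtype.val this⟩ :
        {k : ℕ | g ^ (n k) = (h0 : G)})) ?_
    intro a b hab
    exact Subtype.ext (by simpa [Subtype.ext_iff] using hab)
  obtain ⟨h0, hh0⟩ := this
  obtain ⟨k0, hk0⟩ := hh0.nonempty
  have hclosed : IsClosed ((h0 : G) • K) :=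
    (hK.image (hiso (h0 : G)).continuous).isClosed
  have hfreq : ∃ᶠ k in atTop, u k ∈ (h0 : G) • K := by
    rw [Nat.frequently_atTop_iff_infinite]
    refine hh0.mono ?_
    intro k hk
    obtain ⟨y, hy, hyk⟩ := hn k
    exact ⟨y, hy, by rw [← hk]; exact hyk⟩
  have hx : x ∈ (h0 : G) • K :=
    hclosed.closure_subset (mem_closure_of_frequently_of_tendsto hfreq hux)
  exact Set.mem_iUnion.2 ⟨n k0, by rwa [hk0]⟩
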